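/- Let A = K[[f_1,…,f_s]] ⊆ F = K[[x_1,…,x_n]] with the length of F/A as an A-module finite, and let a, b ∈ (ℝ_{>0})^n. If in(A,a) ⊆ in(A,b), then in(A,a) = in(A,b). Equivalently, if in(A,a) ≠ in(A,b) then in(A,a) is not contained in in(A,b). -/

import Mathlib

noncomputable section

namespace CanonicalFan

open MvPowerSeries

variable (K : Type*) [Field K] (n : ℕ)

/-- The weight `⟨a, α⟩ = ∑ i, a i * α i` of an exponent `α` with respect to `a`. -/
def weight (a : Fin n → ℝ) (α : Fin n →₀ ℕ) : ℝ := ∑ i, a i * (α i : ℝ)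

/-- The support of a formal power series. -/
def supp (f : MvPowerSeries (Fin n) K) : Set (Fin n →₀ ℕ) :=
  {α | MvPowerSeries.coeff α f ≠ 0}

/-- The `a`-valuation `ν(f,a)`, with the convention `ν(0,a) = +∞`. -/
def nu (a : Fin n → ℝ) (f : MvPowerSeries (Fin n) K) : EReal :=
  sInf ((fun α => ((weight n a α : ℝ) : EReal)) '' supp K n f)

open Classical in
/-- The `a`-initial form `in(f,a)` of a power series. -/
def initialForm (a : Fin n → ℝ) (f : MvPowerSeries (Fin n) K) :
    MvPowerSeries (Fin n) K :=
  fun α => if ((weight n a α : ℝ) : EReal) = nu K n a f then MvPowerSeries.coeff α f else 0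

open Classical in
/-- `exp(f,a)`: the `≺`-maximal element of the support of `in(f,a)`, where `≺` is the
well-ordering `r` (junk value `0` if no maximal element exists). -/
def exponent (r : (Fin n →₀ ℕ) → (Fin n →₀ ℕ) → Prop) (a : Fin n → ℝ)
    (f : MvPowerSeries (Fin n) K) : Fin n →₀ ℕ :=
  if h : ∃ β ∈ supp K n (initialForm K n a f),
      ∀ γ ∈ supp K n (initialForm K n a f), γ = β ∨ r γ β
  then h.choose else 0

/-- The `a`-leading monomial `M(f,a) = c_{exp(f,a)} x^{exp(f,a)}`. -/
def leadMon (r : (Fin n →₀ ℕ) → (Fin n →₀ ℕ) → Prop) (a : Fin n → ℝ)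
    (f : MvPowerSeries (Fin n) K) : MvPowerSeries (Fin n) K :=
  MvPowerSeries.monomial (exponent K n r a f)
    (MvPowerSeries.coeff (exponent K n r a f) f)

/-- The maximal ideal `(x_1, …, x_n)` of `K[[x_1,…,x_n]]`. -/
def mIdeal : Ideal (MvPowerSeries (Fin n) K) :=
  Ideal.span (Set.range (MvPowerSeries.X : Fin n → MvPowerSeries (Fin n) K))

/-- `K[[S]]`: the smallest `K`-subalgebra of `K[[x_1,…,x_n]]` containing `S` and closed in
the `(x_1,…,x_n)`-adic topology; concretely, the adic closure of `Algebra.adjoin K S`. -/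
def closedAdjoin (S : Set (MvPowerSeries (Fin n) K)) :
    Subalgebra K (MvPowerSeries (Fin n) K) where
  carrier := {f | ∀ N : ℕ, ∃ g ∈ Algebra.adjoin K S, f - g ∈ (mIdeal K n) ^ N}
  algebraMap_mem' c N :=
    ⟨algebraMap K _ c, Subalgebra.algebraMap_mem _ c, by simp [Ideal.zero_mem]⟩
  add_mem' {f g} hf hg N := by
    obtain ⟨p, hp, hfp⟩ := hf N
    obtain ⟨q, hq, hgq⟩ := hg N
    exact ⟨p + q, add_mem hp hq, by simpa [add_sub_add_comm] using Ideal.add_mem _ hfp hgq⟩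
  mul_mem' {f g} hf hg N := by
    obtain ⟨p, hp, hfp⟩ := hf N
    obtain ⟨q, hq, hgq⟩ := hg N
    refine ⟨p * q, mul_mem hp hq, ?_⟩
    have h : f * g - p * q = f * (g - q) + (f - p) * q := by ring
    rw [h]
    exact Ideal.add_mem _ (Ideal.mul_mem_left _ _ hgq) (Ideal.mul_mem_right _ _ hfp)

/-- `exp(A,a) = {exp(f,a) : f ∈ A, f ≠ 0}`. -/
def expSet (r : (Fin n →₀ ℕ) → (Fin n →₀ ℕ) → Prop) (a : Fin n → ℝ)
    (A : Set (MvPowerSeries (Fin n) K)) : Set (Fin n →₀ ℕ) :=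
  {β | ∃ f ∈ A, f ≠ 0 ∧ exponent K n r a f = β}

/-- `in(A,a) = K[[in(f,a) : f ∈ A ∖ {0}]]`. -/
def inAlgebra (a : Fin n → ℝ) (A : Set (MvPowerSeries (Fin n) K)) :
    Subalgebra K (MvPowerSeries (Fin n) K) :=
  closedAdjoin K n {g | ∃ f ∈ A, f ≠ 0 ∧ initialForm K n a f = g}

/-- `M(A,a) = K[[M(f,a) : f ∈ A ∖ {0}]]`. -/
def leadAlgebra (r : (Fin n →₀ ℕ) → (Fin n →₀ ℕ) → Prop) (a : Fin n → ℝ)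
    (A : Set (MvPowerSeries (Fin n) K)) : Subalgebra K (MvPowerSeries (Fin n) K) :=
  closedAdjoin K n {g | ∃ f ∈ A, f ≠ 0 ∧ leadMon K n r a f = g}

set_option synthInstance.maxHeartbeats 1000000 in
/-- The length of `F/A` as an `A`-module is finite. -/
def FiniteColength (A : Subalgebra K (MvPowerSeries (Fin n) K)) : Prop :=
  IsFiniteLength A
    (MvPowerSeries (Fin n) K ⧸ LinearMap.range (Algebra.linearMap A (MvPowerSeries (Fin n) K)))

/-- `{g_1,…,g_r}` is an `a`-canonical basis of `A`. -/
def IsCanonicalBasis (r : (Fin n →₀ ℕ) → (Fin n →₀ ℕ) → Prop) (a : Fin n → ℝ)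
    (A : Subalgebra K (MvPowerSeries (Fin n) K)) {m : ℕ}
    (g : Fin m → MvPowerSeries (Fin n) K) : Prop :=
  (∀ i, g i ∈ A ∧ g i ≠ 0) ∧
    leadAlgebra K n r a (A : Set (MvPowerSeries (Fin n) K)) =
      closedAdjoin K n (Set.range fun i => leadMon K n r a (g i))

/-- `{g_1,…,g_r}` is a minimal `a`-canonical basis of `A`. -/
def IsMinimalCanonicalBasis (r : (Fin n →₀ ℕ) → (Fin n →₀ ℕ) → Prop) (a : Fin n → ℝ)
    (A : Subalgebra K (MvPowerSeries (Fin n) K)) {m : ℕ}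
    (g : Fin m → MvPowerSeries (Fin n) K) : Prop :=
  IsCanonicalBasis K n r a A g ∧
    ∀ T : Set (MvPowerSeries (Fin n) K),
      T ⊂ Set.range (fun i => leadMon K n r a (g i)) →
        closedAdjoin K n T ≠ leadAlgebra K n r a (A : Set (MvPowerSeries (Fin n) K))

/-- `{g_1,…,g_r}` is the `a`-reduced canonical basis of `A`. -/
def IsReducedCanonicalBasis (r : (Fin n →₀ ℕ) → (Fin n →₀ ℕ) → Prop) (a : Fin n → ℝ)
    (A : Subalgebra K (MvPowerSeries (Fin n) K)) {m : ℕ}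
    (g : Fin m → MvPowerSeries (Fin n) K) : Prop :=
  IsMinimalCanonicalBasis K n r a A g ∧
    (∀ i, MvPowerSeries.coeff (exponent K n r a (g i)) (g i) = 1) ∧
    ∀ i, ∀ α ∈ supp K n (g i - leadMon K n r a (g i)),
      (MvPowerSeries.monomial α (1 : K)) ∉
        closedAdjoin K n (Set.range fun j => leadMon K n r a (g j))

/-- A power series is a (nonzero) monomial. -/
def IsMonomial (g : MvPowerSeries (Fin n) K) : Prop :=
  ∃ (α : Fin n →₀ ℕ) (c : K), c ≠ 0 ∧ g = MvPowerSeries.monomial α c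

section Aux
variable {K : Type*} [Field K] {n : ℕ}

local notation "F" => MvPowerSeries (Fin n) K

/-- total degree of an exponent -/
def deg (α : Fin n →₀ ℕ) : ℕ := ∑ i, α i

lemma deg_add (α β : Fin n →₀ ℕ) : deg (α + β) = deg α + deg β := by
  simp [deg, Finset.sum_add_distrib]

lemma le_deg (α : Fin n →₀ ℕ) (i : Fin n) : α i ≤ deg α :=
  Finset.single_le_sum (f := fun j => α j) (fun _ _ => Nat.zero_le _) (Finset.mem_univ i)

lemma coeff_apply (f : F) (α : Fin n →₀ ℕ) : MvPowerSeries.coeff α f = f α := rfl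

lemma exists_coeff_ne_zero {f : F} (hf : f ≠ 0) : ∃ α, MvPowerSeries.coeff α f ≠ 0 := by
  by_contra h
  push_neg at h
  exact hf (by ext α; simpa using h α)

/-- the ideal of series all of whose terms have degree at least `N` -/
def ordI (K : Type*) [Field K] (n N : ℕ) : Ideal (MvPowerSeries (Fin n) K) where
  carrier := {f | ∀ α, MvPowerSeries.coeff α f ≠ 0 → N ≤ deg α}
  zero_mem' := by intro α h; simp at h
  add_mem' := by
    intro f g hf hg α h
    by_cases h1 : MvPowerSeries.coeff α f ≠ 0
    · exact hf α h1
    · push_neg at h1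
      exact hg α (by simpa [h1] using h)
  smul_mem' := by
    classical
    intro c f hf α h
    rw [smul_eq_mul, MvPowerSeries.coeff_mul] at h
    obtain ⟨p, hp, hne⟩ := Finset.exists_ne_zero_of_sum_ne_zero h
    have h2 : MvPowerSeries.coeff p.2 f ≠ 0 := right_ne_zero_of_mul hne
    have := hf p.2 h2
    have hsum : p.1 + p.2 = α := (Finset.HasAntidiagonal.mem_antidiagonal.mp hp)
    calc N ≤ deg p.2 := this
    _ ≤ deg α := by rw [← hsum, deg_add]; omega

lemma mem_ordI {N : ℕ} {f : F} :
    f ∈ ordI K n N ↔ ∀ α, MvPowerSeries.coeff α f ≠ 0 → N ≤ deg α := Iff.rfl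

lemma ordI_mul_le (M N : ℕ) : ordI K n M * ordI K n N ≤ ordI K n (M + N) := by
  classical
  rw [Ideal.mul_le]
  intro f hf g hg α h
  rw [MvPowerSeries.coeff_mul] at h
  obtain ⟨p, hp, hne⟩ := Finset.exists_ne_zero_of_sum_ne_zero h
  have h1 := hf p.1 (left_ne_zero_of_mul hne)
  have h2 := hg p.2 (right_ne_zero_of_mul hne)
  have hsum : p.1 + p.2 = α := (Finset.HasAntidiagonal.mem_antidiagonal.mp hp)
  rw [← hsum, deg_add]; omega

lemma X_mem_ordI_one (i : Fin n) : (MvPowerSeries.X i : F) ∈ ordI K n 1 := by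
  classical
  intro α h
  rw [MvPowerSeries.coeff_X] at h
  by_cases hα : α = Finsupp.single i 1
  · subst hα
    have : deg (Finsupp.single i 1) = 1 := by
      simp [deg, Finsupp.single_apply]
    omega
  · simp [hα] at h

lemma pow_mIdeal_le_ordI (N : ℕ) : (mIdeal K n) ^ N ≤ ordI K n N := by
  induction N with
  | zero => intro f _ α h; exact Nat.zero_le _
  | succ N ih =>
      have h1 : mIdeal K n ≤ ordI K n 1 := by
        rw [mIdeal, Ideal.span_le]
        rintro - ⟨i, rfl⟩
        exact X_mem_ordI_one i
      calc (mIdeal K n) ^ (N + 1) = (mIdeal K n) ^ N * mIdeal K n := pow_succ _ _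
      _ ≤ ordI K n N * ordI K n 1 := Ideal.mul_mono ih h1
      _ ≤ ordI K n (N + 1) := ordI_mul_le N 1

end Aux
section Aux2
variable {K : Type*} [Field K] {n : ℕ}

local notation "F" => MvPowerSeries (Fin n) K

open Classical in
/-- the `i`-th piece in the canonical decomposition `f = ∑ i, X i * slice i f` for
series with no constant term. -/
def slice (i : Fin n) (f : F) : F :=
  fun β => if (β + Finsupp.single i 1).support.min = (i : WithTop (Fin n))
    then MvPowerSeries.coeff (β + Finsupp.single i 1) f else 0

open Classical in
lemma coeff_slice (i : Fin n) (f : F) (β : Fin n →₀ ℕ) :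
    MvPowerSeries.coeff β (slice i f) =
      if (β + Finsupp.single i 1).support.min = (i : WithTop (Fin n))
        then MvPowerSeries.coeff (β + Finsupp.single i 1) f else 0 := by
  rw [coeff_apply, slice]

lemma sub_add_single_cancel {α : Fin n →₀ ℕ} {i : Fin n} (h : 1 ≤ α i) :
    α - Finsupp.single i 1 + Finsupp.single i 1 = α := by
  ext j
  rw [Finsupp.add_apply, Finsupp.tsub_apply, Finsupp.single_apply]
  split_ifs with hij
  · subst hij; omega
  · omega

lemma slice_mem_ordI {N : ℕ} {f : F} (hf : f ∈ ordI K n (N + 1)) (i : Fin n) :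
    slice i f ∈ ordI K n N := by
  classical
  intro β hβ
  rw [coeff_slice] at hβ
  split at hβ
  · have := hf _ hβ
    rw [deg_add] at this
    have h1 : deg (Finsupp.single i 1) = 1 := by simp [deg, Finsupp.single_apply]
    omega
  · exact absurd rfl hβ

lemma eq_sum_X_mul_slice {N : ℕ} {f : F} (hf : f ∈ ordI K n (N + 1)) :
    f = ∑ i : Fin n, MvPowerSeries.X i * slice i f := by
  classical
  ext α
  rw [map_sum]
  by_cases hα : MvPowerSeries.coeff α f = 0
  · rw [hα]
    symm
    apply Finset.sum_eq_zero
    intro i _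
    rw [MvPowerSeries.X_def, MvPowerSeries.coeff_monomial_mul]
    split
    · rename_i hle
      rw [one_mul, coeff_slice,
        sub_add_single_cancel (by simpa using Finsupp.single_le_iff.mp hle), hα]
      simp
    · rfl
  · have hα0 : α ≠ 0 := by
      intro h
      have := hf α hα
      subst h
      simp [deg] at this
    have hsupp : α.support.Nonempty := Finsupp.support_nonempty_iff.mpr hα0
    obtain ⟨i0, hi0⟩ := Finset.min_of_nonempty hsupp
    have hi0mem : i0 ∈ α.support := Finset.mem_of_min hi0
    have hi0pos : 1 ≤ α i0 := by
      have := Finsupp.mem_support_iff.mp hi0mem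
      omega
    rw [Finset.sum_eq_single i0]
    · have hle : Finsupp.single i0 1 ≤ α := Finsupp.single_le_iff.mpr hi0pos
      rw [MvPowerSeries.X_def, MvPowerSeries.coeff_monomial_mul, if_pos hle, one_mul,
        coeff_slice, sub_add_single_cancel hi0pos, if_pos (by rw [hi0])]
    · intro i _ hi
      rw [MvPowerSeries.X_def, MvPowerSeries.coeff_monomial_mul]
      split
      · rename_i hle
        rw [one_mul, coeff_slice,
          sub_add_single_cancel (by simpa using Finsupp.single_le_iff.mp hle)]
        rw [if_neg]
        intro h
        rw [hi0] at h
        exact hi (WithTop.coe_inj.mp h).symm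
      · rfl
    · intro h
      exact absurd (Finset.mem_univ i0) h

lemma ordI_le_pow_mIdeal (N : ℕ) : ordI K n N ≤ (mIdeal K n) ^ N := by
  induction N with
  | zero => intro f _; simp
  | succ N ih =>
      intro f hf
      rw [eq_sum_X_mul_slice hf]
      apply Ideal.sum_mem
      intro i _
      rw [pow_succ']
      exact Ideal.mul_mem_mul (Ideal.subset_span ⟨i, rfl⟩) (ih (slice_mem_ordI hf i))

end Aux2
section Aux3
variable {K : Type*} [Field K] {n : ℕ}

local notation "F" => MvPowerSeries (Fin n) K

lemma mem_closedAdjoin_of_approx {S : Set F} {f : F}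
    (h : ∀ M : ℕ, ∃ g ∈ closedAdjoin K n S, f - g ∈ (mIdeal K n) ^ M) :
    f ∈ closedAdjoin K n S := by
  intro M
  obtain ⟨g, hg, hfg⟩ := h M
  obtain ⟨p, hp, hgp⟩ := hg M
  exact ⟨p, hp, by simpa using Ideal.add_mem _ hfg hgp⟩

set_option synthInstance.maxHeartbeats 1000000 in
set_option maxHeartbeats 1000000 in
lemma exists_pow_mIdeal_le
    (A : Subalgebra K (MvPowerSeries (Fin n) K)) (hA : ∃ S : Set F, A = closedAdjoin K n S)
    (hlen : FiniteColength K n A) :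
    ∃ N : ℕ, ∀ f ∈ (mIdeal K n) ^ N, f ∈ A := by
  have hart : IsArtinian ↥A
      (MvPowerSeries (Fin n) K ⧸ LinearMap.range (Algebra.linearMap A (MvPowerSeries (Fin n) K))) :=
    ((isFiniteLength_iff_isNoetherian_isArtinian.mp hlen)).2
  set R : Submodule ↥A (MvPowerSeries (Fin n) K) :=
    LinearMap.range (Algebra.linearMap A (MvPowerSeries (Fin n) K)) with hR
  let c : ℕ → Submodule ↥A (MvPowerSeries (Fin n) K ⧸ R) := fun k =>
    Submodule.map R.mkQ (Submodule.restrictScalars ↥A ((mIdeal K n) ^ k))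
  have hanti : ∀ k l, k ≤ l → c l ≤ c k := by
    intro k l hkl
    exact Submodule.map_mono (fun x hx => Ideal.pow_le_pow_right hkl hx)
  obtain ⟨N, hN⟩ := IsArtinian.monotone_stabilizes (R := ↥A)
    ⟨fun k => OrderDual.toDual (c k), fun {k l} hkl => hanti k l hkl⟩
  refine ⟨N, fun f hf => ?_⟩
  obtain ⟨S, hAS⟩ := hA
  rw [hAS]
  apply mem_closedAdjoin_of_approx
  intro M
  have h1 : R.mkQ f ∈ c (N + M) := by
    have h0 : R.mkQ f ∈ c N := ⟨f, hf, rfl⟩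
    have h2 := hN (N + M) (Nat.le_add_right _ _)
    have h3 : c N = c (N + M) := congrArg OrderDual.ofDual h2
    exact h3 ▸ h0
  obtain ⟨h, hh, hhf⟩ := h1
  have hmem : h - f ∈ R := (Submodule.Quotient.eq R).mp hhf
  obtain ⟨a, ha⟩ := hmem
  refine ⟨f - h, ?_, ?_⟩
  · -- f - h = -(h - f) = -(algebraMap a) ∈ A (as element of closedAdjoin S)
    have haA : h - f ∈ A := by
      rw [← ha]
      show (algebraMap ↥A (MvPowerSeries (Fin n) K)) a ∈ A
      exact a.2
    have : f - h ∈ A := by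
      have := A.neg_mem haA
      simpa using this
    rwa [hAS] at this
  · have : f - (f - h) = h := by ring
    rw [this]
    exact Ideal.pow_le_pow_right (Nat.le_add_left _ _) hh

end Aux3
section Aux4
variable {K : Type*} [Field K] {n : ℕ} {w : Fin n → ℝ}

local notation "F" => MvPowerSeries (Fin n) K

lemma weight_nonneg (hw : ∀ i, 0 < w i) (α : Fin n →₀ ℕ) : 0 ≤ weight n w α :=
  Finset.sum_nonneg fun i _ => mul_nonneg (hw i).le (Nat.cast_nonneg _)

lemma weight_add (α β : Fin n →₀ ℕ) :
    weight n w (α + β) = weight n w α + weight n w β := by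
  rw [weight, weight, weight, ← Finset.sum_add_distrib]
  apply Finset.sum_congr rfl
  intro i _
  have : ((α + β) i : ℝ) = (α i : ℝ) + (β i : ℝ) := by
    rw [Finsupp.add_apply]; push_cast; ring
  rw [this]; ring

lemma weight_single_le (hw : ∀ i, 0 < w i) (α : Fin n →₀ ℕ) (i : Fin n) :
    w i * (α i : ℝ) ≤ weight n w α :=
  Finset.single_le_sum (f := fun j => w j * (α j : ℝ))
    (fun j _ => mul_nonneg (hw j).le (Nat.cast_nonneg _)) (Finset.mem_univ i)

lemma finite_weight_le (hw : ∀ i, 0 < w i) (C : ℝ) :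
    {α : Fin n →₀ ℕ | weight n w α ≤ C}.Finite := by
  classical
  set B : ℕ := Finset.univ.sup (fun i => ⌈C / w i⌉₊) with hB
  apply Set.Finite.subset (Set.finite_Iic (Finsupp.equivFunOnFinite.symm (fun _ => B)))
  intro α hα
  rw [Set.mem_Iic, Finsupp.le_def]
  intro i
  have h1 : w i * (α i : ℝ) ≤ C := le_trans (weight_single_le hw α i) hα
  have h2 : (α i : ℝ) ≤ C / w i := (le_div_iff₀' (hw i)).mpr h1
  have h3 : (α i : ℝ) ≤ (⌈C / w i⌉₊ : ℝ) := le_trans h2 (Nat.le_ceil _)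
  have h4 : α i ≤ ⌈C / w i⌉₊ := Nat.cast_le.mp h3
  show α i ≤ B
  rw [hB]
  exact le_trans h4 (Finset.le_sup (f := fun i => ⌈C / w i⌉₊) (Finset.mem_univ i))

lemma nu_eq_coe {f : F} {t : ℝ}
    (hat : ∃ α, MvPowerSeries.coeff α f ≠ 0 ∧ weight n w α = t)
    (hlb : ∀ β, MvPowerSeries.coeff β f ≠ 0 → t ≤ weight n w β) :
    nu K n w f = (t : EReal) := by
  obtain ⟨α, hα, hαw⟩ := hat
  apply le_antisymm
  · apply sInf_le
    exact ⟨α, hα, by show ((weight n w α : ℝ) : EReal) = (t : EReal); rw [hαw]⟩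
  · apply le_sInf
    rintro x ⟨β, hβ, rfl⟩
    exact EReal.coe_le_coe_iff.mpr (hlb β hβ)

lemma nu_spec (hw : ∀ i, 0 < w i) {f : F} (hf : f ≠ 0) :
    ∃ t : ℝ, nu K n w f = (t : EReal) ∧
      (∃ α, MvPowerSeries.coeff α f ≠ 0 ∧ weight n w α = t) ∧
      (∀ β, MvPowerSeries.coeff β f ≠ 0 → t ≤ weight n w β) := by
  classical
  obtain ⟨α0, hα0⟩ := exists_coeff_ne_zero hf
  set C := weight n w α0 with hC
  have hS : {α : Fin n →₀ ℕ | MvPowerSeries.coeff α f ≠ 0 ∧ weight n w α ≤ C}.Finite :=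
    (finite_weight_le hw C).subset (fun α h => h.2)
  set TF := hS.toFinset with hTF
  have hα0T : α0 ∈ TF := by
    rw [hTF, Set.Finite.mem_toFinset]
    exact ⟨hα0, le_refl _⟩
  have hTFne : (TF.image (weight n w)).Nonempty := ⟨_, Finset.mem_image_of_mem _ hα0T⟩
  set t := (TF.image (weight n w)).min' hTFne with ht
  obtain ⟨α1, hα1T, hα1w⟩ := Finset.mem_image.mp ((TF.image (weight n w)).min'_mem hTFne)
  have hα1 : MvPowerSeries.coeff α1 f ≠ 0 := (Set.Finite.mem_toFinset hS |>.mp hα1T).1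
  have hlb : ∀ β, MvPowerSeries.coeff β f ≠ 0 → t ≤ weight n w β := by
    intro β hβ
    by_cases hβC : weight n w β ≤ C
    · exact Finset.min'_le _ _ (Finset.mem_image_of_mem _
        (by rw [hTF, Set.Finite.mem_toFinset]; exact ⟨hβ, hβC⟩))
    · push_neg at hβC
      calc t ≤ C := Finset.min'_le _ _ (Finset.mem_image_of_mem _ hα0T)
      _ ≤ weight n w β := hβC.le
  exact ⟨t, nu_eq_coe ⟨α1, hα1, hα1w⟩ hlb, ⟨α1, hα1, hα1w⟩, hlb⟩

open Classical in
/-- the weight-`t` part of a power series, as a linear map -/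
def wtp (w : Fin n → ℝ) (t : ℝ) : MvPowerSeries (Fin n) K →ₗ[K] MvPowerSeries (Fin n) K where
  toFun f := fun α => if weight n w α = t then MvPowerSeries.coeff α f else 0
  map_add' f g := by
    ext α
    show (if weight n w α = t then MvPowerSeries.coeff α (f + g) else 0)
      = (if weight n w α = t then MvPowerSeries.coeff α f else 0)
        + (if weight n w α = t then MvPowerSeries.coeff α g else 0)
    rw [map_add]
    split_ifs <;> simp
  map_smul' c f := by
    ext α
    show (if weight n w α = t then MvPowerSeries.coeff α (c • f) else 0)
      = c • (if weight n w α = t then MvPowerSeries.coeff α f else 0)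
    rw [LinearMap.map_smul]
    split_ifs <;> simp

open Classical in
lemma coeff_wtp (t : ℝ) (f : F) (α : Fin n →₀ ℕ) :
    MvPowerSeries.coeff α (wtp w t f) =
      if weight n w α = t then MvPowerSeries.coeff α f else 0 := rfl

open Classical in
lemma coeff_initialForm (f : F) (α : Fin n →₀ ℕ) :
    MvPowerSeries.coeff α (initialForm K n w f) =
      if ((weight n w α : ℝ) : EReal) = nu K n w f then MvPowerSeries.coeff α f else 0 := rfl

lemma initialForm_eq_wtp {f : F} {t : ℝ} (hnu : nu K n w f = (t : EReal)) :
    initialForm K n w f = wtp w t f := by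
  ext α
  rw [coeff_initialForm, coeff_wtp, hnu]
  by_cases h : weight n w α = t
  · rw [if_pos (by exact_mod_cast h), if_pos h]
  · rw [if_neg (by exact_mod_cast h), if_neg h]

lemma initialForm_ne_zero (hw : ∀ i, 0 < w i) {f : F} (hf : f ≠ 0) :
    initialForm K n w f ≠ 0 := by
  obtain ⟨t, hnu, ⟨α, hα, hαw⟩, hlb⟩ := nu_spec hw hf
  rw [initialForm_eq_wtp hnu]
  intro h
  have : MvPowerSeries.coeff α (wtp w t f) = 0 := by rw [h]; simp
  rw [coeff_wtp, if_pos hαw] at this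
  exact hα this

lemma wtp_mul {t u : ℝ} {f g : F}
    (Hf : ∀ β, MvPowerSeries.coeff β f ≠ 0 → t ≤ weight n w β)
    (Hg : ∀ β, MvPowerSeries.coeff β g ≠ 0 → u ≤ weight n w β) :
    wtp w (t + u) (f * g) = wtp w t f * wtp w u g := by
  classical
  ext α
  rw [coeff_wtp, MvPowerSeries.coeff_mul, MvPowerSeries.coeff_mul]
  by_cases h : weight n w α = t + u
  · rw [if_pos h]
    apply Finset.sum_congr rfl
    intro p hp
    rw [coeff_wtp, coeff_wtp]
    by_cases hfp : MvPowerSeries.coeff p.1 f = 0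
    · rw [hfp, zero_mul]
      split_ifs <;> simp [hfp]
    · by_cases hgp : MvPowerSeries.coeff p.2 g = 0
      · rw [hgp, mul_zero]
        split_ifs <;> simp [hgp]
      · have h1 := Hf _ hfp
        have h2 := Hg _ hgp
        have h3 : weight n w p.1 + weight n w p.2 = t + u := by
          rw [← weight_add, Finset.HasAntidiagonal.mem_antidiagonal.mp hp, h]
        have h4 : weight n w p.1 = t := by linarith
        have h5 : weight n w p.2 = u := by linarith
        rw [if_pos h4, if_pos h5]
  · rw [if_neg h]
    symm
    apply Finset.sum_eq_zero
    intro p hp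
    rw [coeff_wtp, coeff_wtp]
    split_ifs with h1 h2
    · exfalso
      apply h
      rw [← Finset.HasAntidiagonal.mem_antidiagonal.mp hp, weight_add, h1, h2]
    all_goals simp

lemma initialForm_mul (hw : ∀ i, 0 < w i) {f g : F} (hf : f ≠ 0) (hg : g ≠ 0) :
    initialForm K n w (f * g) = initialForm K n w f * initialForm K n w g := by
  classical
  obtain ⟨t, hnuf, hatf, hlbf⟩ := nu_spec hw hf
  obtain ⟨u, hnug, hatg, hlbg⟩ := nu_spec hw hg
  have hfg : f * g ≠ 0 := mul_ne_zero hf hg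
  obtain ⟨v, hnufg, ⟨β, hβ, hβw⟩, hlbfg⟩ := nu_spec hw hfg
  have hkey : wtp w (t + u) (f * g) = wtp w t f * wtp w u g := wtp_mul hlbf hlbg
  have hne : wtp w t f * wtp w u g ≠ 0 := by
    rw [← initialForm_eq_wtp hnuf, ← initialForm_eq_wtp hnug]
    exact mul_ne_zero (initialForm_ne_zero hw hf) (initialForm_ne_zero hw hg)
  -- v = t + u
  have hle1 : v ≤ t + u := by
    rw [← hkey] at hne
    obtain ⟨α, hα⟩ := exists_coeff_ne_zero hne
    rw [coeff_wtp] at hα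
    by_cases hcond : weight n w α = t + u
    · rw [if_pos hcond] at hα
      calc v ≤ weight n w α := hlbfg α hα
      _ = t + u := hcond
    · rw [if_neg hcond] at hα
      exact absurd rfl hα
  have hle2 : t + u ≤ v := by
    have hβmul : MvPowerSeries.coeff β (f * g) ≠ 0 := hβ
    rw [MvPowerSeries.coeff_mul] at hβmul
    obtain ⟨p, hp, hne2⟩ := Finset.exists_ne_zero_of_sum_ne_zero hβmul
    have h1 := hlbf _ (left_ne_zero_of_mul hne2)
    have h2 := hlbg _ (right_ne_zero_of_mul hne2)
    have h3 : weight n w p.1 + weight n w p.2 = v := by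
      rw [← weight_add, Finset.HasAntidiagonal.mem_antidiagonal.mp hp, hβw]
    linarith
  have hv : v = t + u := le_antisymm hle1 hle2
  rw [initialForm_eq_wtp hnuf, initialForm_eq_wtp hnug, initialForm_eq_wtp hnufg, hv, hkey]

lemma initialForm_monomial {α : Fin n →₀ ℕ} {c : K} (hc : c ≠ 0) :
    initialForm K n w (MvPowerSeries.monomial α c) = MvPowerSeries.monomial α c := by
  classical
  have hnu : nu K n w (MvPowerSeries.monomial α c) = ((weight n w α : ℝ) : EReal) := by
    apply nu_eq_coe
    · exact ⟨α, by rwa [MvPowerSeries.coeff_monomial, if_pos rfl], rfl⟩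
    · intro β hβ
      rw [MvPowerSeries.coeff_monomial] at hβ
      by_cases h : β = α
      · rw [h]
      · rw [if_neg h] at hβ; exact absurd rfl hβ
  rw [initialForm_eq_wtp hnu]
  ext β
  rw [coeff_wtp]
  by_cases h : β = α
  · subst h
    rw [if_pos rfl]
  · rw [MvPowerSeries.coeff_monomial, if_neg h]
    split_ifs <;> rfl

lemma initialForm_one : initialForm K n w (1 : F) = 1 := by
  have h1 : (1 : F) = MvPowerSeries.monomial 0 (1 : K) := by
    rw [← MvPowerSeries.monomial_zero_one]
  rw [h1, initialForm_monomial one_ne_zero]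

end Aux4
section Aux5
variable {K : Type*} [Field K] {n : ℕ}

local notation "F" => MvPowerSeries (Fin n) K

/-- the finite set of exponents of degree less than `N` -/
def DN (n N : ℕ) : Finset (Fin n →₀ ℕ) :=
  (Finset.Iic (Finsupp.equivFunOnFinite.symm fun _ => N)).filter (fun α => deg α < N)

lemma mem_DN {N : ℕ} {α : Fin n →₀ ℕ} : α ∈ DN n N ↔ deg α < N := by
  rw [DN, Finset.mem_filter]
  constructor
  · exact fun h => h.2
  · intro h
    refine ⟨?_, h⟩
    rw [Finset.mem_Iic, Finsupp.le_def]
    intro i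
    show α i ≤ N
    exact le_trans (le_deg α i) (le_of_lt h)

/-- truncation of a power series to its coefficients of degree `< N` -/
def pimap (K : Type*) [Field K] (n N : ℕ) :
    MvPowerSeries (Fin n) K →ₗ[K] (↥(DN n N) → K) :=
  LinearMap.pi fun α => MvPowerSeries.coeff α.1

lemma pimap_apply {N : ℕ} (f : F) (α : ↥(DN n N)) :
    pimap K n N f α = MvPowerSeries.coeff α.1 f := rfl

lemma pimap_eq_zero {N : ℕ} {f : F} :
    pimap K n N f = 0 ↔ ∀ α, deg α < N → MvPowerSeries.coeff α f = 0 := by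
  constructor
  · intro h α hα
    have := congrFun h ⟨α, mem_DN.mpr hα⟩
    exact this
  · intro h
    funext α
    exact h α.1 (mem_DN.mp α.2)

lemma pimap_eq_zero_of_ordI {N : ℕ} {f : F} (hf : f ∈ ordI K n N) :
    pimap K n N f = 0 := by
  rw [pimap_eq_zero]
  intro α hα
  by_contra h
  exact absurd (hf α h) (by omega)

/-- elements of `A` all of whose terms have weight at least `t` -/
def Age (A : Subalgebra K (MvPowerSeries (Fin n) K)) (w : Fin n → ℝ) (t : ℝ) :
    Submodule K (MvPowerSeries (Fin n) K) where
  carrier := {f | f ∈ A ∧ ∀ α, MvPowerSeries.coeff α f ≠ 0 → t ≤ weight n w α}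
  zero_mem' := ⟨A.zero_mem, fun α h => absurd (map_zero _) h⟩
  add_mem' := by
    rintro f g ⟨hfA, hf⟩ ⟨hgA, hg⟩
    refine ⟨A.add_mem hfA hgA, fun α h => ?_⟩
    rw [map_add] at h
    by_cases h1 : MvPowerSeries.coeff α f ≠ 0
    · exact hf α h1
    · push_neg at h1
      exact hg α (by intro h2; rw [h1, h2, add_zero] at h; exact h rfl)
  smul_mem' := by
    rintro c f ⟨hfA, hf⟩
    refine ⟨A.smul_mem hfA c, fun α h => ?_⟩
    rw [LinearMap.map_smul] at h
    exact hf α (by intro h2; rw [h2, smul_zero] at h; exact h rfl)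

/-- elements of `A` all of whose terms have weight greater than `t` -/
def Agt (A : Subalgebra K (MvPowerSeries (Fin n) K)) (w : Fin n → ℝ) (t : ℝ) :
    Submodule K (MvPowerSeries (Fin n) K) where
  carrier := {f | f ∈ A ∧ ∀ α, MvPowerSeries.coeff α f ≠ 0 → t < weight n w α}
  zero_mem' := ⟨A.zero_mem, fun α h => absurd (map_zero _) h⟩
  add_mem' := by
    rintro f g ⟨hfA, hf⟩ ⟨hgA, hg⟩
    refine ⟨A.add_mem hfA hgA, fun α h => ?_⟩
    rw [map_add] at h
    by_cases h1 : MvPowerSeries.coeff α f ≠ 0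
    · exact hf α h1
    · push_neg at h1
      exact hg α (by intro h2; rw [h1, h2, add_zero] at h; exact h rfl)
  smul_mem' := by
    rintro c f ⟨hfA, hf⟩
    refine ⟨A.smul_mem hfA c, fun α h => ?_⟩
    rw [LinearMap.map_smul] at h
    exact hf α (by intro h2; rw [h2, smul_zero] at h; exact h rfl)

lemma Agt_le_Age {A : Subalgebra K (MvPowerSeries (Fin n) K)} {w : Fin n → ℝ} {t : ℝ} :
    Agt A w t ≤ Age A w t := by
  rintro f ⟨hfA, hf⟩
  exact ⟨hfA, fun α h => (hf α h).le⟩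

/-- the weight-`t` graded piece of the truncated initial algebra -/
def Gsub (N : ℕ) (A : Subalgebra K (MvPowerSeries (Fin n) K)) (w : Fin n → ℝ) (t : ℝ) :
    Submodule K (↥(DN n N) → K) :=
  Submodule.map ((pimap K n N).comp (wtp w t)) (Age A w t)

end Aux5
section Aux6
variable {K : Type*} [Field K] {n : ℕ}

local notation "F" => MvPowerSeries (Fin n) K

variable {N : ℕ} {A : Subalgebra K (MvPowerSeries (Fin n) K)} {w : Fin n → ℝ}

set_option synthInstance.maxHeartbeats 1000000 in
set_option maxHeartbeats 1000000 in
/-- the graded rank identity: `dim G_t + dim π(A_{>t}) = dim π(A_{≥t})` -/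
lemma rank_step (hNA : ∀ g : F, g ∈ ordI K n N → g ∈ A) (t : ℝ) :
    Module.finrank K (Gsub N A w t) + Module.finrank K (Submodule.map (pimap K n N) (Agt A w t))
      = Module.finrank K (Submodule.map (pimap K n N) (Age A w t)) := by
  classical
  set T : Submodule K (↥(DN n N) → K) := Submodule.map (pimap K n N) (Agt A w t) with hT
  set φ1 : ↥(Age A w t) →ₗ[K] (↥(DN n N) → K) :=
    ((pimap K n N).comp (wtp w t)).comp (Age A w t).subtype with hφ1
  set φ2 : ↥(Age A w t) →ₗ[K] ((↥(DN n N) → K) ⧸ T) :=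
    (T.mkQ.comp (pimap K n N)).comp (Age A w t).subtype with hφ2
  have hker : LinearMap.ker φ1 = LinearMap.ker φ2 := by
    ext x
    rw [LinearMap.mem_ker, LinearMap.mem_ker]
    constructor
    · intro hx
      -- the weight-t part g of x is in ordI N, hence in A; x - g ∈ Agt t
      set g : F := wtp w t x.1 with hg
      have hgord : g ∈ ordI K n N := by
        intro α hα
        by_contra hdeg
        have : pimap K n N g ⟨α, mem_DN.mpr (by omega)⟩ = 0 := by
          have : pimap K n N g = 0 := hx
          rw [this]; rfl
        rw [pimap_apply] at this
        exact hα this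
      have hgA : g ∈ A := hNA g hgord
      have hsub : x.1 - g ∈ Agt A w t := by
        refine ⟨A.sub_mem x.2.1 hgA, fun α hα => ?_⟩
        rw [map_sub, coeff_wtp] at hα
        by_cases hwt : weight n w α = t
        · rw [if_pos hwt, sub_self] at hα
          exact absurd rfl hα
        · rw [if_neg hwt, sub_zero] at hα
          exact lt_of_le_of_ne (x.2.2 α hα) (Ne.symm hwt)
      show T.mkQ (pimap K n N x.1) = 0
      rw [Submodule.mkQ_apply, Submodule.Quotient.mk_eq_zero]
      have : pimap K n N x.1 = pimap K n N (x.1 - g) + pimap K n N g := by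
        rw [← map_add]; congr 1; ring
      have hg0 : pimap K n N g = 0 := hx
      rw [this, hg0, add_zero]
      exact ⟨x.1 - g, hsub, rfl⟩
    · intro hx
      have hx' : pimap K n N x.1 ∈ T := by
        have := hx
        rw [hφ2] at this
        simp only [LinearMap.comp_apply, Submodule.mkQ_apply, Submodule.Quotient.mk_eq_zero] at this
        exact this
      obtain ⟨g, hgmem, hgeq⟩ := hx'
      show pimap K n N (wtp w t x.1) = 0
      funext α
      rw [pimap_apply, coeff_wtp]
      by_cases hwt : weight n w α.1 = t
      · rw [if_pos hwt]
        have hcoeff : MvPowerSeries.coeff α.1 x.1 = MvPowerSeries.coeff α.1 g := by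
          have := congrFun hgeq α
          rw [pimap_apply, pimap_apply] at this
          exact this.symm
        rw [hcoeff]
        by_contra hne
        have := hgmem.2 α.1 hne
        rw [hwt] at this
        exact lt_irrefl t this
      · rw [if_neg hwt]
        rfl
  -- ranks of the two ranges agree
  have hrange1 : LinearMap.range φ1 = Gsub N A w t := by
    rw [hφ1, LinearMap.range_comp, Submodule.range_subtype]
    rfl
  have e12 : (↥(LinearMap.range φ1)) ≃ₗ[K] ↥(LinearMap.range φ2) :=
    ((LinearMap.quotKerEquivRange φ1).symm.trans
      (Submodule.quotEquivOfEq _ _ hker)).trans (LinearMap.quotKerEquivRange φ2)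
  have hrank12 : Module.finrank K (Gsub N A w t) = Module.finrank K (LinearMap.range φ2) := by
    rw [← hrange1]
    exact e12.finrank_eq
  -- range φ2 = image of π(A_{≥t}) in the quotient by T
  set S : Submodule K (↥(DN n N) → K) := Submodule.map (pimap K n N) (Age A w t) with hS
  have hTS : T ≤ S := Submodule.map_mono Agt_le_Age
  set ψ : ↥S →ₗ[K] ((↥(DN n N) → K) ⧸ T) := T.mkQ.comp S.subtype with hψ
  have hrange2 : LinearMap.range φ2 = LinearMap.range ψ := by
    rw [hφ2, hψ, LinearMap.range_comp, Submodule.range_subtype, Submodule.map_comp,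
      LinearMap.range_comp, Submodule.range_subtype]
  have hrankψ : Module.finrank K (LinearMap.range ψ) + Module.finrank K T
      = Module.finrank K S := by
    have h1 := LinearMap.finrank_range_add_finrank_ker ψ
    have hkerψ : LinearMap.ker ψ = Submodule.comap S.subtype T := by
      rw [hψ, LinearMap.ker_comp, Submodule.ker_mkQ]
    have h2 : Module.finrank K (LinearMap.ker ψ) = Module.finrank K T := by
      rw [hkerψ]
      exact (Submodule.comapSubtypeEquivOfLe hTS).finrank_eq
    rw [h2] at h1
    exact h1
  rw [hrank12, hrange2]
  rw [← hrankψ]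

/-- strip lemma: if no truncation-relevant weight lies in `(t, t')`, the images agree -/
lemma strip (hNA : ∀ g : F, g ∈ ordI K n N → g ∈ A) {t t' : ℝ} (htt : t < t')
    (hgap : ∀ α : Fin n →₀ ℕ, deg α < N → ¬(t < weight n w α ∧ weight n w α < t')) :
    Submodule.map (pimap K n N) (Agt A w t) = Submodule.map (pimap K n N) (Age A w t') := by
  classical
  apply le_antisymm
  · rintro - ⟨f, ⟨hfA, hf⟩, rfl⟩
    set low : F := fun α => if weight n w α < t' then MvPowerSeries.coeff α f else 0 with hlow
    have hcoefflow : ∀ α, MvPowerSeries.coeff α low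
        = if weight n w α < t' then MvPowerSeries.coeff α f else 0 := fun α => rfl
    have hloword : low ∈ ordI K n N := by
      intro α hα
      rw [hcoefflow] at hα
      by_contra hdeg
      push_neg at hdeg
      split_ifs at hα with hcond
      · exact (hgap α (by omega) ⟨hf α hα, hcond⟩)
      · exact hα rfl
    have hlowA : low ∈ A := hNA low hloword
    have hsub : f - low ∈ Age A w t' := by
      refine ⟨A.sub_mem hfA hlowA, fun α hα => ?_⟩
      rw [map_sub, hcoefflow] at hα
      split_ifs at hα with hcond
      · rw [sub_self] at hα; exact absurd rfl hα
      · push_neg at hcond; exact hcond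
    have : pimap K n N f = pimap K n N (f - low) := by
      have hpl : pimap K n N low = 0 := pimap_eq_zero_of_ordI hloword
      rw [map_sub, hpl, sub_zero]
    rw [this]
    exact ⟨f - low, hsub, rfl⟩
  · apply Submodule.map_mono
    rintro f ⟨hfA, hf⟩
    exact ⟨hfA, fun α hα => lt_of_lt_of_le htt (hf α hα)⟩

/-- below the largest relevant weight there is nothing left -/
lemma strip_bot {t : ℝ}
    (htop : ∀ α : Fin n →₀ ℕ, deg α < N → weight n w α ≤ t) :
    Submodule.map (pimap K n N) (Agt A w t) = ⊥ := by
  rw [Submodule.eq_bot_iff]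
  rintro - ⟨f, ⟨hfA, hf⟩, rfl⟩
  rw [pimap_eq_zero]
  intro α hα
  by_contra h
  exact absurd (htop α hα) (not_le.mpr (hf α h))

/-- at `t = -1` we see all of `A` -/
lemma strip_top (hw : ∀ i, 0 < w i) :
    Submodule.map (pimap K n N) (Agt A w (-1))
      = Submodule.map (pimap K n N) (Subalgebra.toSubmodule A) := by
  congr 1
  ext f
  constructor
  · exact fun h => h.1
  · intro h
    exact ⟨h, fun α _ => lt_of_lt_of_le (by norm_num) (weight_nonneg hw α)⟩

end Aux6
section Aux7
variable {K : Type*} [Field K] {n : ℕ}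

local notation "F" => MvPowerSeries (Fin n) K

variable {N : ℕ} {A : Subalgebra K (MvPowerSeries (Fin n) K)} {w : Fin n → ℝ}

/-- the finite set of weights of low-degree exponents -/
def TW (n N : ℕ) (w : Fin n → ℝ) : Finset ℝ := (DN n N).image (weight n w)

open Classical in
lemma master (hNA : ∀ g : F, g ∈ ordI K n N → g ∈ A) :
    ∀ (s : Finset ℝ), ∀ t : ℝ, (TW n N w).filter (fun u => t < u) = s →
      Module.finrank K (Submodule.map (pimap K n N) (Agt A w t))
        = ∑ u ∈ s, Module.finrank K (Gsub N A w u) := by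
  intro s
  induction s using Finset.strongInduction with
  | _ s ih =>
    intro t hfil
    rcases s.eq_empty_or_nonempty with hs | hs
    · subst hs
      have hbot : Submodule.map (pimap K n N) (Agt A w t) = ⊥ := by
        apply strip_bot
        intro α hα
        by_contra hlt
        push_neg at hlt
        have : weight n w α ∈ (TW n N w).filter (fun u => t < u) := by
          rw [Finset.mem_filter]
          exact ⟨Finset.mem_image_of_mem _ (mem_DN.mpr hα), hlt⟩
        rw [hfil] at this
        exact absurd this (Finset.notMem_empty _)
      rw [hbot]
      simp
    · set t0 := s.min' hs with ht0
      have ht0s : t0 ∈ s := s.min'_mem hs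
      have ht0fil : t0 ∈ (TW n N w).filter (fun u => t < u) := by rw [hfil]; exact ht0s
      rw [Finset.mem_filter] at ht0fil
      obtain ⟨ht0TW, htt0⟩ := ht0fil
      have hgap : ∀ α : Fin n →₀ ℕ, deg α < N →
          ¬(t < weight n w α ∧ weight n w α < t0) := by
        rintro α hα ⟨h1, h2⟩
        have : weight n w α ∈ s := by
          rw [← hfil, Finset.mem_filter]
          exact ⟨Finset.mem_image_of_mem _ (mem_DN.mpr hα), h1⟩
        exact absurd (s.min'_le _ this) (not_le.mpr h2)
      have hstrip := strip (A := A) hNA htt0 hgap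
      have hstep := rank_step (A := A) (w := w) hNA t0
      have hfil2 : (TW n N w).filter (fun u => t0 < u) = s.erase t0 := by
        ext u
        rw [Finset.mem_filter, Finset.mem_erase]
        constructor
        · rintro ⟨huTW, hu⟩
          refine ⟨ne_of_gt hu, ?_⟩
          rw [← hfil, Finset.mem_filter]
          exact ⟨huTW, lt_trans htt0 hu⟩
        · rintro ⟨hune, hus⟩
          have := hus
          rw [← hfil, Finset.mem_filter] at this
          exact ⟨this.1, lt_of_le_of_ne (s.min'_le _ hus) (Ne.symm hune)⟩
      have hih := ih (s.erase t0) (Finset.erase_ssubset ht0s) t0 hfil2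
      rw [hstrip, ← hstep, hih, ← Finset.add_sum_erase _ _ ht0s]

end Aux7

section AuxU
variable (K : Type*) [Field K]

/-- monomial-supported graded subspaces of the truncation space -/
def Usub (n : ℕ) (N : ℕ) (w : Fin n → ℝ) (u : ℝ) : Submodule K (↥(DN n N) → K) where
  carrier := {v | ∀ α, v α ≠ 0 → weight n w α.1 = u}
  zero_mem' := fun α h => absurd rfl h
  add_mem' := by
    intro v1 v2 h1 h2 α h
    by_cases hv1 : v1 α ≠ 0
    · exact h1 α hv1
    · push_neg at hv1
      refine h2 α ?_
      intro h2'
      rw [Pi.add_apply, hv1, h2', add_zero] at h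
      exact h rfl
  smul_mem' := by
    intro c v hv α h
    refine hv α ?_
    intro h'
    rw [Pi.smul_apply, h', smul_zero] at h
    exact h rfl

def UsubS (n : ℕ) (N : ℕ) (w : Fin n → ℝ) (s : Finset ℝ) : Submodule K (↥(DN n N) → K) where
  carrier := {v | ∀ α, v α ≠ 0 → weight n w α.1 ∈ s}
  zero_mem' := fun α h => absurd rfl h
  add_mem' := by
    intro v1 v2 h1 h2 α h
    by_cases hv1 : v1 α ≠ 0
    · exact h1 α hv1
    · push_neg at hv1
      refine h2 α ?_
      intro h2'
      rw [Pi.add_apply, hv1, h2', add_zero] at h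
      exact h rfl
  smul_mem' := by
    intro c v hv α h
    refine hv α ?_
    intro h'
    rw [Pi.smul_apply, h', smul_zero] at h
    exact h rfl

end AuxU

section Aux7b
variable {K : Type*} [Field K] {n : ℕ}
local notation "F" => MvPowerSeries (Fin n) K
variable {N : ℕ} {A : Subalgebra K (MvPowerSeries (Fin n) K)} {w : Fin n → ℝ}

lemma Gsub_le_Usub {u : ℝ} : Gsub N A w u ≤ Usub K n N w u := by
  rintro - ⟨f, hf, rfl⟩
  intro α hα
  have : pimap K n N (wtp w u f) α ≠ 0 := hα
  rw [pimap_apply, coeff_wtp] at this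
  by_contra h
  rw [if_neg h] at this
  exact this rfl

lemma Usub_le_UsubS {u : ℝ} {s : Finset ℝ} (hu : u ∈ s) :
    Usub K n N w u ≤ UsubS K n N w s := by
  intro v hv α hα
  rw [hv α hα]
  exact hu

open Classical in
lemma sup_finrank (s : Finset ℝ) :
    Module.finrank K ↥((s.sup (Gsub N A w) : Submodule K (↥(DN n N) → K)))
      = ∑ u ∈ s, Module.finrank K (Gsub N A w u) := by
  induction s using Finset.induction_on with
  | empty => simp
  | @insert a s' hx ih =>
    rw [Finset.sup_insert, Finset.sum_insert hx, ← ih]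
    have hinf : Gsub N A w a ⊓ s'.sup (Gsub N A w) = ⊥ := by
      rw [Submodule.eq_bot_iff]
      rintro v ⟨hv1, hv2⟩
      have hU1 : v ∈ Usub K n N w a := Gsub_le_Usub hv1
      have hU2 : v ∈ UsubS K n N w s' := by
        refine (Finset.sup_le (fun u hu => ?_) : s'.sup (Gsub N A w) ≤ UsubS K n N w s') hv2
        exact le_trans Gsub_le_Usub (Usub_le_UsubS hu)
      funext α
      by_contra h
      have h1 := hU1 α h
      have h2 := hU2 α h
      rw [h1] at h2
      exact hx h2
    have := Submodule.finrank_sup_add_finrank_inf_eq (Gsub N A w a) (s'.sup (Gsub N A w))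
    rw [hinf] at this
    simp only [finrank_bot, add_zero] at this
    exact this

end Aux7b
section Aux8
variable {K : Type*} [Field K] {n : ℕ}

local notation "F" => MvPowerSeries (Fin n) K

variable {N : ℕ} {A : Subalgebra K (MvPowerSeries (Fin n) K)} {w : Fin n → ℝ}

/-- the generating set of the initial algebra -/
def Sin (Aset : Set (MvPowerSeries (Fin n) K)) (w : Fin n → ℝ) : Set (MvPowerSeries (Fin n) K) :=
  {g | ∃ f ∈ Aset, f ≠ 0 ∧ initialForm K n w f = g}

lemma inAlgebra_eq_closedAdjoin_Sin (Aset : Set (MvPowerSeries (Fin n) K)) :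
    inAlgebra K n w Aset = closedAdjoin K n (Sin Aset w) := rfl

lemma one_mem_Sin : (1 : F) ∈ Sin (A : Set (MvPowerSeries (Fin n) K)) w :=
  ⟨1, A.one_mem, one_ne_zero, initialForm_one⟩

lemma mul_mem_Sin (hw : ∀ i, 0 < w i) {x y : F}
    (hx : x ∈ Sin (A : Set (MvPowerSeries (Fin n) K)) w)
    (hy : y ∈ Sin (A : Set (MvPowerSeries (Fin n) K)) w) :
    x * y ∈ Sin (A : Set (MvPowerSeries (Fin n) K)) w := by
  obtain ⟨f, hfA, hf0, rfl⟩ := hx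
  obtain ⟨g, hgA, hg0, rfl⟩ := hy
  exact ⟨f * g, A.mul_mem hfA hgA, mul_ne_zero hf0 hg0, (initialForm_mul hw hf0 hg0)⟩

/-- `Sin` is a submonoid, so the subalgebra it generates is its span -/
lemma adjoin_Sin_eq_span (hw : ∀ i, 0 < w i) :
    Subalgebra.toSubmodule (Algebra.adjoin K (Sin (A : Set (MvPowerSeries (Fin n) K)) w))
      = Submodule.span K (Sin (A : Set (MvPowerSeries (Fin n) K)) w) := by
  rw [Algebra.adjoin_eq_span]
  congr 1
  have : (Submonoid.closure (Sin (A : Set (MvPowerSeries (Fin n) K)) w) :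
      Set (MvPowerSeries (Fin n) K)) = Sin (A : Set (MvPowerSeries (Fin n) K)) w := by
    set M : Submonoid (MvPowerSeries (Fin n) K) :=
      { carrier := Sin (A : Set (MvPowerSeries (Fin n) K)) w
        one_mem' := one_mem_Sin
        mul_mem' := fun hx hy => mul_mem_Sin hw hx hy } with hM
    have h1 : Submonoid.closure (Sin (A : Set (MvPowerSeries (Fin n) K)) w) = M := by
      apply le_antisymm
      · exact Submonoid.closure_le.mpr (fun x hx => hx)
      · intro x hx
        exact Submonoid.subset_closure hx
    rw [h1]
    rfl
  rw [this]

/-- reducing a closed adjoin mod `m^N` is the same as reducing the plain adjoin -/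
lemma pimap_closedAdjoin (S : Set (MvPowerSeries (Fin n) K)) :
    Submodule.map (pimap K n N) (Subalgebra.toSubmodule (closedAdjoin K n S))
      = Submodule.map (pimap K n N) (Subalgebra.toSubmodule (Algebra.adjoin K S)) := by
  apply le_antisymm
  · rintro - ⟨f, hf, rfl⟩
    obtain ⟨g, hg, hfg⟩ := hf N
    have : pimap K n N f = pimap K n N g := by
      have h0 : pimap K n N (f - g) = 0 :=
        pimap_eq_zero_of_ordI (pow_mIdeal_le_ordI N hfg)
      rw [map_sub] at h0
      have := sub_eq_zero.mp h0
      exact this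
    rw [this]
    exact ⟨g, hg, rfl⟩
  · apply Submodule.map_mono
    intro f hf
    intro M
    exact ⟨f, hf, by simp⟩

/-- the span of truncated initial forms is the sum of the graded pieces -/
lemma span_pimap_Sin (hw : ∀ i, 0 < w i) :
    Submodule.span K (pimap K n N '' Sin (A : Set (MvPowerSeries (Fin n) K)) w)
      = (TW n N w).sup (Gsub N A w) := by
  apply le_antisymm
  · rw [Submodule.span_le]
    rintro - ⟨g, ⟨f, hfA, hf0, rfl⟩, rfl⟩
    obtain ⟨t, hnu, hat, hlb⟩ := nu_spec hw hf0
    rw [initialForm_eq_wtp hnu]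
    by_cases ht : t ∈ TW n N w
    · have hmem : pimap K n N (wtp w t f) ∈ Gsub N A w t := ⟨f, ⟨hfA, hlb⟩, rfl⟩
      exact Finset.le_sup (f := Gsub N A w) ht hmem
    · have h0 : pimap K n N (wtp w t f) = 0 := by
        funext α
        have hcond : weight n w α.1 ≠ t :=
          fun hcond => ht (by rw [← hcond]; exact Finset.mem_image_of_mem _ α.2)
        rw [pimap_apply, coeff_wtp, if_neg hcond]
        simp
      rw [h0]
      exact Submodule.zero_mem _
  · apply Finset.sup_le
    intro u hu
    rintro - ⟨f, ⟨hfA, hflb⟩, rfl⟩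
    show pimap K n N (wtp w u f) ∈ _
    by_cases hf0 : f = 0
    · subst hf0
      rw [map_zero, map_zero]
      exact Submodule.zero_mem _
    · obtain ⟨t, hnu, ⟨α0, hα0, hα0w⟩, hlb⟩ := nu_spec hw hf0
      have hut : u ≤ t := by rw [← hα0w]; exact hflb α0 hα0
      by_cases htu : t = u
      · subst htu
        apply Submodule.subset_span
        exact ⟨initialForm K n w f, ⟨f, hfA, hf0, rfl⟩, by rw [initialForm_eq_wtp hnu]⟩
      · have hlt : u < t := lt_of_le_of_ne hut (fun h => htu h.symm)
        have : wtp w u f = 0 := by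
          ext β
          rw [coeff_wtp]
          split_ifs with hcond
          · by_contra hne
            have := hlb β hne
            rw [hcond] at this
            exact absurd this (not_le.mpr hlt)
          · rfl
        rw [this, map_zero]
        exact Submodule.zero_mem _

/-- high-order elements belong to the closed initial algebra -/
lemma ordI_le_closedAdjoin_Sin (hNA : ∀ g : F, g ∈ ordI K n N → g ∈ A) {f : F}
    (hford : f ∈ ordI K n N) :
    f ∈ closedAdjoin K n (Sin (A : Set (MvPowerSeries (Fin n) K)) w) := by
  classical
  intro M
  set g : F := ∑ α ∈ DN n M, (MvPowerSeries.monomial α (MvPowerSeries.coeff α f)) with hg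
  have hcoeffg : ∀ β, MvPowerSeries.coeff β g
      = if β ∈ DN n M then MvPowerSeries.coeff β f else 0 := by
    intro β
    rw [hg, map_sum]
    rw [Finset.sum_congr rfl (fun α _ => MvPowerSeries.coeff_monomial β α _)]
    exact Finset.sum_ite_eq (DN n M) β (fun α => MvPowerSeries.coeff α f)
  refine ⟨g, ?_, ?_⟩
  · apply Subalgebra.sum_mem
    intro α hα
    by_cases hc : MvPowerSeries.coeff α f = 0
    · rw [hc, map_zero]
      exact Subalgebra.zero_mem _
    · apply Algebra.subset_adjoin
      refine ⟨MvPowerSeries.monomial α (MvPowerSeries.coeff α f), ?_, ?_, ?_⟩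
      · apply hNA
        intro β hβ
        rw [MvPowerSeries.coeff_monomial] at hβ
        split_ifs at hβ with hβα
        · subst hβα
          exact hford _ hc
        · exact absurd rfl hβ
      · intro hzero
        apply hc
        have := congrArg (MvPowerSeries.coeff α) hzero
        rwa [MvPowerSeries.coeff_monomial, if_pos rfl, map_zero] at this
      · exact initialForm_monomial hc
  · apply ordI_le_pow_mIdeal
    intro β hβ
    rw [map_sub, hcoeffg] at hβ
    split_ifs at hβ with hmem
    · rw [sub_self] at hβ
      exact absurd rfl hβ
    · rw [mem_DN] at hmem
      omega

end Aux8
section Aux9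
variable {K : Type*} [Field K] {n : ℕ}

local notation "F" => MvPowerSeries (Fin n) K

variable {N : ℕ} {A : Subalgebra K (MvPowerSeries (Fin n) K)} {w : Fin n → ℝ}

set_option synthInstance.maxHeartbeats 1000000 in
set_option maxHeartbeats 1000000 in
/-- the central count: mod `m^N`, the initial algebra has the same dimension as `A` -/
lemma count (hw : ∀ i, 0 < w i) (hNA : ∀ g : F, g ∈ ordI K n N → g ∈ A) :
    Module.finrank K (Submodule.map (pimap K n N)
        (Subalgebra.toSubmodule (inAlgebra K n w (A : Set (MvPowerSeries (Fin n) K)))))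
      = Module.finrank K (Submodule.map (pimap K n N) (Subalgebra.toSubmodule A)) := by
  rw [inAlgebra_eq_closedAdjoin_Sin, pimap_closedAdjoin, adjoin_Sin_eq_span hw,
    Submodule.map_span, span_pimap_Sin hw, sup_finrank]
  have hfil : (TW n N w).filter (fun u => (-1:ℝ) < u) = TW n N w := by
    apply Finset.filter_true_of_mem
    intro u hu
    obtain ⟨α, hα, rfl⟩ := Finset.mem_image.mp hu
    exact lt_of_lt_of_le (by norm_num) (weight_nonneg hw α)
  have hm := master (A := A) hNA (TW n N w) (-1) hfil
  rw [strip_top hw] at hm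
  exact hm.symm

end Aux9
set_option synthInstance.maxHeartbeats 1000000 in
set_option maxHeartbeats 1000000 in
/-- if `in(A,a) ⊆ in(A,b)` then `in(A,a) = in(A,b)`. -/
theorem inAlgebra_le_iff_eq
    (r : (Fin n →₀ ℕ) → (Fin n →₀ ℕ) → Prop) (hr : IsWellOrder (Fin n →₀ ℕ) r)
    (hradd : ∀ α β γ : Fin n →₀ ℕ, r α β → r (α + γ) (β + γ))
    (s : ℕ) (f : Fin s → MvPowerSeries (Fin n) K) (hf : ∀ i, f i ≠ 0)
    (A : Subalgebra K (MvPowerSeries (Fin n) K)) (hA : A = closedAdjoin K n (Set.range f))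
    (hlen : FiniteColength K n A)
    (a b : Fin n → ℝ) (ha : ∀ i, 0 < a i) (hb : ∀ i, 0 < b i)
    (hab : inAlgebra K n a (A : Set (MvPowerSeries (Fin n) K)) ≤
      inAlgebra K n b (A : Set (MvPowerSeries (Fin n) K))) :
    inAlgebra K n a (A : Set (MvPowerSeries (Fin n) K)) =
      inAlgebra K n b (A : Set (MvPowerSeries (Fin n) K)) := by
  classical
  obtain ⟨N, hN⟩ := exists_pow_mIdeal_le A ⟨Set.range f, hA⟩ hlen
  have hNA : ∀ g : MvPowerSeries (Fin n) K, g ∈ ordI K n N → g ∈ A :=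
    fun g hg => hN g (ordI_le_pow_mIdeal N hg)
  have hca := count (N := N) (A := A) ha hNA
  have hcb := count (N := N) (A := A) hb hNA
  have hle : Submodule.map (pimap K n N)
      (Subalgebra.toSubmodule (inAlgebra K n a (A : Set (MvPowerSeries (Fin n) K))))
      ≤ Submodule.map (pimap K n N)
        (Subalgebra.toSubmodule (inAlgebra K n b (A : Set (MvPowerSeries (Fin n) K)))) :=
    Submodule.map_mono (fun x hx => hab hx)
  have heq : Submodule.map (pimap K n N)
      (Subalgebra.toSubmodule (inAlgebra K n a (A : Set (MvPowerSeries (Fin n) K))))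
      = Submodule.map (pimap K n N)
        (Subalgebra.toSubmodule (inAlgebra K n b (A : Set (MvPowerSeries (Fin n) K)))) :=
    Submodule.eq_of_le_of_finrank_le hle (le_of_eq (hcb.trans hca.symm))
  apply le_antisymm hab
  intro x hx
  have hx' : pimap K n N x ∈ Submodule.map (pimap K n N)
      (Subalgebra.toSubmodule (inAlgebra K n a (A : Set (MvPowerSeries (Fin n) K)))) := by
    rw [heq]
    exact ⟨x, hx, rfl⟩
  obtain ⟨g, hg, hgx⟩ := hx'
  have hxg : x - g ∈ ordI K n N := by
    intro α hα
    by_contra hdeg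
    push_neg at hdeg
    have h1 := congrFun hgx ⟨α, mem_DN.mpr hdeg⟩
    rw [pimap_apply, pimap_apply] at h1
    rw [map_sub, h1, sub_self] at hα
    exact hα rfl
  have hxg2 : x - g ∈ inAlgebra K n a (A : Set (MvPowerSeries (Fin n) K)) := by
    rw [inAlgebra_eq_closedAdjoin_Sin]
    exact ordI_le_closedAdjoin_Sin hNA hxg
  have hxeq : x = g + (x - g) := by ring
  rw [hxeq]
  exact Subalgebra.add_mem _ hg hxg2

end CanonicalFan
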